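/- Let K be a field of characteristic zero, q ∈ K, and n ≥ 0. Let f ∈ K[x_1,…,x_n,y] be a nonzero polynomial that is q-harmonic in the n+1 variables x_1,…,x_n,y, and let d be the degree of f in the variable y. Then the coefficient of y^d in f (an element of K[x_1,…,x_n]) is q-harmonic in the n variables x_1,…,x_n. -/

import Mathlib

open MvPolynomial

/-- The `q`-Steenrod operator `P_k` on `K[x_1,…,x_n]`:
`P_k(p) = ∑ i, x_i^k • (p + q • x_i • ∂p/∂x_i)`. -/
noncomputable def steenrodP (K : Type) [Field K] (q : K) (n k : ℕ) :
    Module.End K (MvPolynomial (Fin n) K) :=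
  ∑ i : Fin n, (LinearMap.mulLeft K (X i ^ k : MvPolynomial (Fin n) K)) ∘ₗ
    (LinearMap.id + q • ((LinearMap.mulLeft K (X i : MvPolynomial (Fin n) K)) ∘ₗ
      (pderiv i).toLinearMap))

/-- The dual `q`-Steenrod operator `P_k^*` on `K[x_1,…,x_n]`:
`P_k^*(p) = ∑ i, (∂^k p/∂x_i^k + q • x_i • ∂^{k+1} p/∂x_i^{k+1})`. -/
noncomputable def steenrodPdual (K : Type) [Field K] (q : K) (n k : ℕ) :
    Module.End K (MvPolynomial (Fin n) K) :=
  ∑ i : Fin n,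
    ((((pderiv i).toLinearMap : Module.End K (MvPolynomial (Fin n) K)) ^ k)
      + q • ((LinearMap.mulLeft K (X i : MvPolynomial (Fin n) K)) ∘ₗ
          ((((pderiv i).toLinearMap : Module.End K (MvPolynomial (Fin n) K)) ^ (k+1) : Module.End K (MvPolynomial (Fin n) K)) : MvPolynomial (Fin n) K →ₗ[K] MvPolynomial (Fin n) K)))

/-- The bilinear form `B(p,r) = ∑_m m! ⬝ p_m ⬝ r_m` over exponent vectors `m`. -/
noncomputable def formB {K : Type} [Field K] {n : ℕ} (p r : MvPolynomial (Fin n) K) : K :=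
  ∑ m ∈ p.support, (∏ i, ((m i).factorial : K)) * p.coeff m * r.coeff m

/-- `p` is `q`-harmonic if it is killed by all the dual `q`-Steenrod operators. -/
def IsQHarmonic {K : Type} [Field K] {n : ℕ} (q : K) (p : MvPolynomial (Fin n) K) : Prop :=
  ∀ k : ℕ, 1 ≤ k → steenrodPdual K q n k p = 0

/-- The space of `q`-hit polynomials: the span of the ranges of the `P_k`, `k ≥ 1`. -/
noncomputable def qHit (K : Type) [Field K] (q : K) (n : ℕ) :
    Submodule K (MvPolynomial (Fin n) K) :=
  Submodule.span K (⋃ k ∈ {k : ℕ | 1 ≤ k}, Set.range (steenrodP K q n k))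

/-- For a list `λ = [λ_1, …, λ_m]`, the operator `P_λ = P_{λ_1} ∘ ⋯ ∘ P_{λ_m}`. -/
noncomputable def steenrodPList (K : Type) [Field K] (q : K) (n : ℕ) (l : List ℕ) :
    Module.End K (MvPolynomial (Fin n) K) :=
  (l.map (steenrodP K q n)).prod


private lemma coeff_pderiv' {R : Type*} [CommSemiring R] {σ : Type*} [DecidableEq σ] (i : σ)
    (m : σ →₀ ℕ) (p : MvPolynomial σ R) :
    coeff m (pderiv i p) = (m i + 1) • coeff (m + Finsupp.single i 1) p := by
  induction p using MvPolynomial.induction_on' with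
  | add p q hp hq => simp [hp, hq]
  | monomial s a =>
    rw [pderiv_monomial, coeff_monomial, coeff_monomial]
    by_cases h : s = m + Finsupp.single i 1
    · subst h
      rw [if_pos rfl, if_pos (by rw [add_tsub_cancel_right])]
      simp [nsmul_eq_mul, mul_comm]
    · rw [if_neg h]
      by_cases h2 : s - Finsupp.single i 1 = m
      · rw [if_pos h2]
        by_cases h3 : s i = 0
        · simp [h3]
        · exfalso
          apply h
          ext j
          by_cases hj : j = i
          · subst hj
            simp [← h2, Finsupp.tsub_apply]
            omega
          · simp [← h2, Finsupp.tsub_apply, Finsupp.single_apply, Ne.symm hj]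
      · rw [if_neg h2, smul_zero]

private lemma coeff_pderiv_pow {R : Type*} [CommSemiring R] {σ : Type*} [DecidableEq σ] (i : σ)
    (k : ℕ) (m : σ →₀ ℕ) (p : MvPolynomial σ R) :
    coeff m ((((pderiv i).toLinearMap : Module.End R (MvPolynomial σ R)) ^ k) p)
      = ((m i + k).descFactorial k) • coeff (m + Finsupp.single i k) p := by
  induction k generalizing p with
  | zero => simp
  | succ k ih =>
    rw [pow_succ, Module.End.mul_apply, ih]
    rw [show (((pderiv i).toLinearMap : Module.End R (MvPolynomial σ R)) p) = pderiv i p from rfl, coeff_pderiv']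
    rw [← smul_assoc]
    congr 1
    · simp only [Finsupp.add_apply, Finsupp.single_apply, if_pos rfl, smul_eq_mul, if_true]
      rw [show m i + (k + 1) = (m i + k) + 1 by omega, Nat.succ_descFactorial_succ, mul_comm]
    · rw [add_assoc, ← Finsupp.single_add]

private lemma cons_add_single_zero' {n : ℕ} (d k : ℕ) (m : Fin n →₀ ℕ) :
    Finsupp.cons d m + Finsupp.single (0 : Fin (n+1)) k = Finsupp.cons (d + k) m := by
  ext j
  refine Fin.cases ?_ (fun j => ?_) j <;>
    simp [Finsupp.single_apply, (Fin.succ_ne_zero _).symm]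

private lemma cons_add_single_succ' {n : ℕ} (d k : ℕ) (i : Fin n) (m : Fin n →₀ ℕ) :
    Finsupp.cons d m + Finsupp.single i.succ k = Finsupp.cons d (m + Finsupp.single i k) := by
  ext j
  refine Fin.cases ?_ (fun j => ?_) j <;>
    simp [Finsupp.single_apply, Fin.succ_ne_zero, Fin.succ_inj]

private lemma cons_sub_single_succ' {n : ℕ} (d : ℕ) (i : Fin n) (m : Fin n →₀ ℕ) :
    Finsupp.cons d m - Finsupp.single i.succ 1 = Finsupp.cons d (m - Finsupp.single i 1) := by
  ext j
  refine Fin.cases ?_ (fun j => ?_) j <;>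
    simp [Finsupp.tsub_apply, Finsupp.single_apply, Fin.succ_ne_zero, Fin.succ_inj]

private lemma cons_sub_single_zero' {n : ℕ} (d : ℕ) (m : Fin n →₀ ℕ) :
    Finsupp.cons (d+1) m - Finsupp.single (0 : Fin (n+1)) 1 = Finsupp.cons d m := by
  ext j
  refine Fin.cases ?_ (fun j => ?_) j <;>
    simp [Finsupp.tsub_apply, Finsupp.single_apply, (Fin.succ_ne_zero _).symm]

/-- If `f ∈ K[x_1,…,x_n,y]` is a nonzero `q`-harmonic polynomial in
`n+1` variables and `d` is its degree in the distinguished variable `y`, then the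
coefficient of `y^d` in `f` is `q`-harmonic in the remaining `n` variables. -/
theorem leadingCoeff_of_qHarmonic_isQHarmonic (K : Type) [Field K] [CharZero K] (q : K)
    (n : ℕ) (f : MvPolynomial (Fin (n + 1)) K) (hf : f ≠ 0)
    (hharm : IsQHarmonic q f) :
    IsQHarmonic q (Polynomial.coeff (finSuccEquiv K n f) (f.degreeOf 0)) := by
  intro k hk
  obtain ⟨d, hD⟩ : ∃ d, f.degreeOf 0 = d := ⟨_, rfl⟩
  rw [hD]
  have hvan : ∀ (m : Fin n →₀ ℕ) (e : ℕ), d < e → coeff (Finsupp.cons e m) f = 0 := by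
    intro m e he
    by_contra h
    have h2 := monomial_le_degreeOf 0 (mem_support_iff.2 h)
    rw [Finsupp.cons_zero, hD] at h2
    omega
  ext m
  have h0 : coeff (Finsupp.cons d m) (steenrodPdual K q (n+1) k f) = 0 := by
    rw [hharm k hk, coeff_zero]
  rw [coeff_zero, ← h0]
  simp only [steenrodPdual, LinearMap.sum_apply, LinearMap.add_apply, LinearMap.smul_apply,
    LinearMap.comp_apply, LinearMap.mulLeft_apply, coeff_sum, coeff_add, coeff_smul,
    Fin.sum_univ_succ, smul_eq_mul]
  have hz1 : coeff (Finsupp.cons d m)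
      ((((pderiv (0 : Fin (n+1))).toLinearMap : Module.End K (MvPolynomial (Fin (n+1)) K)) ^ k) f)
      = 0 := by
    rw [coeff_pderiv_pow, cons_add_single_zero', hvan m (d + k) (by omega), smul_zero]
  have hz2 : coeff (Finsupp.cons d m)
      (X (0 : Fin (n+1)) *
        (((pderiv (0 : Fin (n+1))).toLinearMap : Module.End K (MvPolynomial (Fin (n+1)) K)) ^ (k+1)) f)
      = 0 := by
    rw [coeff_X_mul']
    by_cases hd0 : (0 : Fin (n+1)) ∈ (Finsupp.cons d m).support
    · rw [if_pos hd0]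
      have hdpos : 0 < d := by
        have h3 := Finsupp.mem_support_iff.1 hd0
        rw [Finsupp.cons_zero] at h3
        omega
      obtain ⟨e, rfl⟩ : ∃ e, d = e + 1 := ⟨d - 1, by omega⟩
      rw [cons_sub_single_zero', coeff_pderiv_pow, cons_add_single_zero',
        hvan m (e + (k+1)) (by omega), smul_zero]
    · rw [if_neg hd0]
  have hsucc : ∀ i : Fin n,
      coeff m ((((pderiv i).toLinearMap : Module.End K (MvPolynomial (Fin n) K)) ^ k)
          ((finSuccEquiv K n f).coeff d)) +
        q * coeff m (X i * (((pderiv i).toLinearMap : Module.End K (MvPolynomial (Fin n) K)) ^ (k+1))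
          ((finSuccEquiv K n f).coeff d)) =
      coeff (Finsupp.cons d m)
          ((((pderiv i.succ).toLinearMap : Module.End K (MvPolynomial (Fin (n+1)) K)) ^ k) f) +
        q * coeff (Finsupp.cons d m) (X i.succ *
          (((pderiv i.succ).toLinearMap : Module.End K (MvPolynomial (Fin (n+1)) K)) ^ (k+1)) f) := by
    intro i
    congr 1
    · rw [coeff_pderiv_pow, coeff_pderiv_pow, finSuccEquiv_coeff_coeff,
        cons_add_single_succ', Finsupp.cons_succ]
    · congr 1
      rw [coeff_X_mul', coeff_X_mul']
      have hmem : i.succ ∈ (Finsupp.cons d m).support ↔ i ∈ m.support := by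
        simp [Finsupp.mem_support_iff, Finsupp.cons_succ]
      by_cases him : i ∈ m.support
      · rw [if_pos him, if_pos (hmem.2 him), coeff_pderiv_pow, coeff_pderiv_pow,
          cons_sub_single_succ', Finsupp.cons_succ, cons_add_single_succ',
          finSuccEquiv_coeff_coeff]
      · rw [if_neg him, if_neg (fun h => him (hmem.1 h))]
  rw [hz1, hz2, mul_zero, add_zero, zero_add]
  exact Finset.sum_congr rfl fun i _ => hsucc i
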